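/- For any real θ and natural numbers m, q, k with q ≤ k < 2m−q, the sum (1/(2m+1)) ∑_{ℓ=0}^{2m} (sin((θ+2πℓ)/(2m+1)))^{2k+1} · sin((2q+1)(θ+2πℓ)/(2m+1)) equals ((−1)^q/2^{2k+1})·C(2k+1, k−q), and for k < q the sum equals 0. -/

import Mathlib

open Real Finset

lemma geom_zero (N : ℕ) (c : ℤ) (hc : ¬ (N:ℤ) ∣ c) :
    ∑ ℓ ∈ Finset.range N, Complex.exp (2 * Real.pi * c / N * Complex.I) ^ ℓ = 0 := by
  rcases Nat.eq_zero_or_pos N with h | hN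
  · subst h; simp
  have hNC : (N:ℂ) ≠ 0 := Nat.cast_ne_zero.2 hN.ne'
  have hζ : Complex.exp (2 * Real.pi * c / N * Complex.I) ≠ 1 := by
    intro h
    rw [Complex.exp_eq_one_iff] at h
    obtain ⟨n, hn⟩ := h
    apply hc
    have hpi : (Real.pi : ℂ) ≠ 0 := Complex.ofReal_ne_zero.2 Real.pi_ne_zero
    have hI : (Complex.I : ℂ) ≠ 0 := Complex.I_ne_zero
    have h2 : (c : ℂ) = n * N := by
      have h3 : 2 * (Real.pi:ℂ) * c / N * Complex.I * N = n * (2 * Real.pi * Complex.I) * N := by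
        rw [hn]
      field_simp at h3
      have h4 : (2 * (Real.pi:ℂ) * Complex.I) * c = (2 * (Real.pi:ℂ) * Complex.I) * (n * N) := by
        linear_combination (2 * (Real.pi:ℂ) * Complex.I) * h3
      exact mul_left_cancel₀ (by simp [hpi, hI]) h4
    have : c = n * N := by exact_mod_cast h2
    exact ⟨n, by rw [this, mul_comm]⟩
  rw [geom_sum_eq hζ]
  have hN1 : Complex.exp (2 * Real.pi * c / N * Complex.I) ^ N = 1 := by
    rw [← Complex.exp_nat_mul]
    have : (N:ℂ) * (2 * Real.pi * c / N * Complex.I) = c * (2 * Real.pi * Complex.I) := by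
      field_simp
    rw [this, Complex.exp_int_mul_two_pi_mul_I]
  rw [hN1]; simp

lemma sum_exp (N : ℕ) (hN : 0 < N) (θ : ℝ) (c : ℤ) :
    ∑ ℓ ∈ Finset.range N, Complex.exp ((c : ℂ) * (((θ + 2 * Real.pi * ℓ) / N : ℝ) : ℂ) * Complex.I)
      = if (N:ℤ) ∣ c then (N : ℂ) * Complex.exp ((c:ℂ) * θ / N * Complex.I) else 0 := by
  have hNC : (N:ℂ) ≠ 0 := Nat.cast_ne_zero.2 hN.ne'
  have key : ∀ ℓ : ℕ, Complex.exp ((c : ℂ) * (((θ + 2 * Real.pi * ℓ) / N : ℝ) : ℂ) * Complex.I)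
      = Complex.exp ((c:ℂ) * θ / N * Complex.I) * Complex.exp (2 * Real.pi * c / N * Complex.I) ^ ℓ := by
    intro ℓ
    rw [← Complex.exp_nat_mul, ← Complex.exp_add]
    congr 1
    push_cast
    field_simp
  simp_rw [key, ← Finset.mul_sum]
  split_ifs with h
  · obtain ⟨d, rfl⟩ := h
    have h1 : ∀ ℓ : ℕ, Complex.exp (2 * Real.pi * ((N:ℤ) * d : ℤ) / N * Complex.I) ^ ℓ = 1 := by
      intro ℓ
      have h2 : (2 * Real.pi * (((N:ℤ) * d : ℤ) : ℂ) / N * Complex.I) = (d : ℂ) * (2 * Real.pi * Complex.I) := by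
        push_cast; field_simp
      rw [h2]
      rw [show ((d:ℂ) * (2 * Real.pi * Complex.I)) = ((d:ℤ):ℂ) * (2 * Real.pi * Complex.I) by norm_num,
        Complex.exp_int_mul_two_pi_mul_I, one_pow]
    simp_rw [h1]
    simp [mul_comm]
  · rw [geom_zero N c h, mul_zero]

lemma sum_exp_two (m : ℕ) (θ : ℝ) (d : ℤ) (hd : d.natAbs ≤ 2*m) :
    ∑ ℓ ∈ Finset.range (2*m+1),
        Complex.exp (((2*d : ℤ) : ℂ) * (((θ + 2 * Real.pi * ℓ) / (2*m+1) : ℝ) : ℂ) * Complex.I)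
      = if d = 0 then ((2*m+1 : ℕ) : ℂ) else 0 := by
  have h := sum_exp (2*m+1) (by omega) θ (2*d)
  push_cast at h ⊢
  rw [h]
  by_cases hd0 : d = 0
  · subst hd0; norm_num
  · rw [if_neg hd0, if_neg]
    intro hdvd
    have hcop : IsCoprime ((2*m+1 : ℕ) : ℤ) 2 := by
      rw [Int.isCoprime_iff_gcd_eq_one]
      simp [Int.gcd]
    have hdvd2 : ((2*m+1 : ℕ) : ℤ) ∣ 2 * d := by exact_mod_cast hdvd
    have hdvd' : ((2*m+1 : ℕ) : ℤ) ∣ d := hcop.dvd_of_dvd_mul_left hdvd2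
    have hle : ((2*m+1 : ℕ) : ℤ) ≤ |d| :=
      Int.le_of_dvd (by positivity : (0:ℤ) < |d|) ((dvd_abs _ _).2 hdvd')
    have h2 : (2*m+1 : ℤ) ≤ |d| := by exact_mod_cast hle
    have h3 : |d| = (d.natAbs : ℤ) := Int.abs_eq_natAbs d
    omega



-- polynomial identity
lemma poly_id (b : ℂ) (k q : ℕ) :
    (1 - b) ^ (2*k+1) * (1 - b^(2*q+1))
      = ∑ j ∈ Finset.range (2*k+2), ((2*k+1).choose j : ℂ) * (-1)^j * (b^j - b^j * b^(2*q+1)) := by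
  have hbin : (1 - b) ^ (2*k+1) = ∑ j ∈ Finset.range (2*k+2), ((2*k+1).choose j : ℂ) * (-1)^j * b^j := by
    rw [show (1 - b) = (-b + 1) by ring, add_pow (-b) 1 (2*k+1)]
    apply Finset.sum_congr rfl
    intro j hj
    rw [neg_pow]
    ring
  rw [hbin, Finset.sum_mul]
  apply Finset.sum_congr rfl
  intro j hj
  ring

lemma alg (a : ℂ) (ha : a ≠ 0) (k q : ℕ) :
    (a ^ (-1 : ℤ) - a) ^ (2*k+1) * (a ^ (-(2*(q:ℤ)+1)) - a ^ (2*(q:ℤ)+1))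
      = ∑ j ∈ Finset.range (2*k+2), ((2*k+1).choose j : ℂ) * (-1)^j *
          (a ^ (2*((j:ℤ)-k-q-1)) - a ^ (2*((j:ℤ)-k+q))) := by
  have hz : ∀ (u v : ℤ), a ^ u * a ^ v = a ^ (u+v) := fun u v => (zpow_add₀ ha u v).symm
  have e1 : a ^ (-1 : ℤ) - a = a ^ (-1 : ℤ) * (1 - a^2) := by
    rw [mul_sub, mul_one]
    congr 1
    rw [show a^2 = a^(2:ℤ) by norm_cast, hz]
    norm_num
  have e2 : a ^ (-(2*(q:ℤ)+1)) - a ^ (2*(q:ℤ)+1) = a ^ (-(2*(q:ℤ)+1)) * (1 - (a^2)^(2*q+1)) := by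
    rw [mul_sub, mul_one]
    congr 1
    rw [show (a^2)^(2*q+1) = a^((2:ℤ)*(2*q+1)) by rw [← zpow_natCast a 2, ← zpow_natCast _ (2*q+1), ← zpow_mul]; push_cast; ring_nf, hz]
    congr 1
    push_cast
    ring
  have e3 : (a ^ (-1 : ℤ)) ^ (2*k+1) = a ^ (-(2*(k:ℤ)+1)) := by
    rw [← zpow_natCast (a ^ (-1:ℤ)), ← zpow_mul]
    congr 1
    push_cast
    ring
  rw [e1, e2, mul_pow, e3]
  have e4 : a ^ (-(2*(k:ℤ)+1)) * (1 - a^2)^(2*k+1) * (a ^ (-(2*(q:ℤ)+1)) * (1 - (a^2)^(2*q+1)))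
      = a ^ (-(2*(k:ℤ)+2*q+2)) * ((1 - a^2)^(2*k+1) * (1 - (a^2)^(2*q+1))) := by
    rw [show a ^ (-(2*(k:ℤ)+2*q+2)) = a ^ (-(2*(k:ℤ)+1)) * a ^ (-(2*(q:ℤ)+1)) by rw [hz]; ring_nf]
    ring
  rw [e4, poly_id (a^2) k q, Finset.mul_sum]
  apply Finset.sum_congr rfl
  intro j hj
  have f1 : a ^ (2*((j:ℤ)-k-q-1)) = a ^ (-(2*(k:ℤ)+2*q+2)) * (a^2)^j := by
    rw [show (a^2)^j = a^((2:ℤ)*j) by rw [← zpow_natCast a 2, ← zpow_natCast _ j, ← zpow_mul]; push_cast; ring_nf, hz]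
    congr 1
    ring
  have f2 : a ^ (2*((j:ℤ)-k+q)) = a ^ (-(2*(k:ℤ)+2*q+2)) * ((a^2)^j * (a^2)^(2*q+1)) := by
    have g1 : (a^2)^j * (a^2)^(2*q+1) = a^((2:ℤ)*j + 2*(2*q+1)) := by
      rw [← zpow_natCast (a^2) j, ← zpow_natCast (a^2) (2*q+1), ← zpow_natCast a 2, ← zpow_mul, ← zpow_mul, hz]
      congr 1 <;> (push_cast; ring)
    rw [g1, hz]
    congr 1
    ring
  rw [f1, f2]
  ring




lemma expand (x : ℝ) (k q : ℕ) :
    ((Real.sin x : ℝ) : ℂ) ^ (2*k+1) * ((Real.sin ((2*(q:ℝ)+1)*x) : ℝ) : ℂ)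
      = (Complex.I/2) ^ (2*k+2) * ∑ j ∈ Finset.range (2*k+2),
          ((2*k+1).choose j : ℂ) * (-1)^j *
            (Complex.exp (((2*((j:ℤ)-k-q-1) : ℤ) : ℂ) * (x:ℂ) * Complex.I)
              - Complex.exp (((2*((j:ℤ)-k+q) : ℤ) : ℂ) * (x:ℂ) * Complex.I)) := by
  set a := Complex.exp ((x:ℂ) * Complex.I) with ha_def
  have ha : a ≠ 0 := Complex.exp_ne_zero _
  have hz : ∀ n : ℤ, Complex.exp ((n:ℂ) * (x:ℂ) * Complex.I) = a ^ n := by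
    intro n
    rw [show ((n:ℂ) * (x:ℂ) * Complex.I) = (n:ℂ) * ((x:ℂ) * Complex.I) by ring, Complex.exp_int_mul]
  have hs1 : ((Real.sin x : ℝ) : ℂ) = (a ^ (-1:ℤ) - a) * Complex.I / 2 := by
    rw [Complex.ofReal_sin]
    show (Complex.exp (-(x:ℂ) * Complex.I) - Complex.exp ((x:ℂ) * Complex.I)) * Complex.I / 2 = _
    congr 3
    rw [show (-(x:ℂ) * Complex.I) = ((-1 : ℤ):ℂ) * (x:ℂ) * Complex.I by push_cast; ring, hz]
  have hs2 : ((Real.sin ((2*(q:ℝ)+1)*x) : ℝ) : ℂ)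
      = (a ^ (-(2*(q:ℤ)+1)) - a ^ (2*(q:ℤ)+1)) * Complex.I / 2 := by
    rw [Complex.ofReal_sin]
    show (Complex.exp (-((((2*(q:ℝ)+1)*x : ℝ)):ℂ) * Complex.I)
        - Complex.exp (((((2*(q:ℝ)+1)*x : ℝ)):ℂ) * Complex.I)) * Complex.I / 2 = _
    congr 3
    · rw [show (-((((2*(q:ℝ)+1)*x : ℝ)):ℂ) * Complex.I) = ((-(2*(q:ℤ)+1) : ℤ):ℂ) * (x:ℂ) * Complex.I by push_cast; ring, hz]
    · rw [show ((((2*(q:ℝ)+1)*x : ℝ)):ℂ) * Complex.I = (((2*(q:ℤ)+1) : ℤ):ℂ) * (x:ℂ) * Complex.I by push_cast; ring, hz]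
  rw [hs1, hs2]
  have e1 : ((a ^ (-1:ℤ) - a) * Complex.I / 2) ^ (2*k+1) * ((a ^ (-(2*(q:ℤ)+1)) - a ^ (2*(q:ℤ)+1)) * Complex.I / 2)
      = (Complex.I/2) ^ (2*k+2) * ((a ^ (-1:ℤ) - a) ^ (2*k+1) * (a ^ (-(2*(q:ℤ)+1)) - a ^ (2*(q:ℤ)+1))) := by
    rw [div_pow, div_pow, mul_pow]
    ring
  rw [e1, alg a ha k q]
  congr 1
  apply Finset.sum_congr rfl
  intro j hj
  rw [hz, hz]




lemma keyC (θ : ℝ) (m q k : ℕ) (hq : q < m) (hk : k < 2*m - q) :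
    ∑ ℓ ∈ Finset.range (2*m+1),
        ((Real.sin ((θ + 2*Real.pi*ℓ)/(2*m+1)) : ℝ) : ℂ) ^ (2*k+1)
          * ((Real.sin ((2*q+1)*(θ + 2*Real.pi*ℓ)/(2*m+1)) : ℝ) : ℂ)
      = if q ≤ k then ((2*m+1:ℕ):ℂ) * ((-1)^q / 2^(2*k+1)) * ((2*k+1).choose (k-q) : ℂ) else 0 := by
  have harg : ∀ ℓ : ℕ, (2*(q:ℝ)+1)*(θ+2*Real.pi*ℓ)/(2*(m:ℝ)+1)
      = (2*(q:ℝ)+1)*((θ+2*Real.pi*ℓ)/(2*(m:ℝ)+1)) := fun ℓ => mul_div_assoc _ _ _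
  simp_rw [harg, expand _ k q, ← Finset.mul_sum]
  rw [Finset.sum_comm]
  rw [show ∑ j ∈ Finset.range (2*k+2), ∑ ℓ ∈ Finset.range (2*m+1),
      ((2*k+1).choose j : ℂ) * (-1)^j *
        (Complex.exp (((2*((j:ℤ)-k-q-1) : ℤ) : ℂ) * (((θ + 2*Real.pi*ℓ)/(2*(m:ℝ)+1) : ℝ):ℂ) * Complex.I)
          - Complex.exp (((2*((j:ℤ)-k+q) : ℤ) : ℂ) * (((θ + 2*Real.pi*ℓ)/(2*(m:ℝ)+1) : ℝ):ℂ) * Complex.I))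
    = ∑ j ∈ Finset.range (2*k+2), ((2*k+1).choose j : ℂ) * (-1)^j *
        ((if (j:ℤ)-k-q-1 = 0 then ((2*m+1:ℕ):ℂ) else 0)
          - (if (j:ℤ)-k+q = 0 then ((2*m+1:ℕ):ℂ) else 0)) from
    Finset.sum_congr rfl (fun j hj => by
      have hj' : j < 2*k+2 := Finset.mem_range.mp hj
      have hkq : k + q + 1 ≤ 2*m := by omega
      rw [← Finset.mul_sum, Finset.sum_sub_distrib,
        sum_exp_two m θ ((j:ℤ)-k-q-1) (by omega),
        sum_exp_two m θ ((j:ℤ)-k+q) (by omega)])]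
  by_cases hqk : q ≤ k
  · rw [if_pos hqk]
    rw [show ∑ j ∈ Finset.range (2*k+2), ((2*k+1).choose j : ℂ) * (-1)^j *
          ((if (j:ℤ)-k-q-1 = 0 then ((2*m+1:ℕ):ℂ) else 0)
            - (if (j:ℤ)-k+q = 0 then ((2*m+1:ℕ):ℂ) else 0))
        = ∑ j ∈ Finset.range (2*k+2),
            ((if j = k+q+1 then ((2*k+1).choose j : ℂ) * (-1)^j * ((2*m+1:ℕ):ℂ) else 0)
              - (if j = k-q then ((2*k+1).choose j : ℂ) * (-1)^j * ((2*m+1:ℕ):ℂ) else 0)) from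
      Finset.sum_congr rfl (fun j hj => by
        have hA : ((j:ℤ)-k-q-1 = 0) ↔ (j = k+q+1) := by omega
        have hB : ((j:ℤ)-k+q = 0) ↔ (j = k-q) := by omega
        simp only [hA, hB, mul_sub, mul_ite, mul_zero])]
    rw [Finset.sum_sub_distrib,
      Finset.sum_ite_eq' (Finset.range (2*k+2)) (k+q+1)
        (fun j => ((2*k+1).choose j : ℂ) * (-1)^j * ((2*m+1:ℕ):ℂ)),
      Finset.sum_ite_eq' (Finset.range (2*k+2)) (k-q)
        (fun j => ((2*k+1).choose j : ℂ) * (-1)^j * ((2*m+1:ℕ):ℂ)),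
      if_pos (Finset.mem_range.mpr (by omega)), if_pos (Finset.mem_range.mpr (by omega))]
    have hCC : ((2*k+1).choose (k+q+1) : ℂ) = ((2*k+1).choose (k-q) : ℂ) := by
      have h := Nat.choose_symm (show k+q+1 ≤ 2*k+1 by omega)
      rw [show 2*k+1-(k+q+1) = k-q by omega] at h
      exact_mod_cast h.symm
    have hI : (Complex.I/2)^(2*k+2) = ((-1:ℂ))^(k+1) / (2^(2*k+1)*2) := by
      have h1 : Complex.I^(2*k+2) = (-1:ℂ)^(k+1) := by
        rw [show 2*k+2 = 2*(k+1) by ring, pow_mul, Complex.I_sq]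
      have h2 : (2:ℂ)^(2*k+2) = 2^(2*k+1)*2 := by
        rw [show 2*k+2 = (2*k+1)+1 by ring, pow_succ]
      rw [div_pow, h1, h2]
    have e5 : (-1:ℂ)^(k+1) * (-1)^(k+q+1) = (-1)^q := by
      rw [← pow_add, show (k+1)+(k+q+1) = 2*(k+1)+q by ring, pow_add, pow_mul]
      norm_num
    have e6 : (-1:ℂ)^(k+1) * (-1)^(k-q) = -(-1)^q := by
      rw [← pow_add, show (k+1)+(k-q) = 2*(k-q)+(q+1) by omega, pow_add, pow_mul, pow_succ]
      norm_num
      ring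
    rw [hCC, hI]
    linear_combination ((((2*k+1).choose (k-q) : ℂ)) * ((2*m+1:ℕ):ℂ) / (2^(2*k+1)*2)) * e5
      - ((((2*k+1).choose (k-q) : ℂ)) * ((2*m+1:ℕ):ℂ) / (2^(2*k+1)*2)) * e6
  · rw [if_neg hqk]
    rw [Finset.sum_eq_zero, mul_zero]
    intro j hj
    have hj' : j < 2*k+2 := Finset.mem_range.mp hj
    rw [if_neg (by omega : ¬((j:ℤ)-k-q-1 = 0)), if_neg (by omega : ¬((j:ℤ)-k+q = 0))]
    ring


theorem stmt_19 (θ : ℝ) (m q k : ℕ) (hq : q < m) :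
    (q ≤ k → k < 2 * m - q →
      (1 / (2 * m + 1 : ℝ)) * ∑ ℓ ∈ Finset.range (2 * m + 1),
          (Real.sin ((θ + 2 * Real.pi * ℓ) / (2 * m + 1))) ^ (2 * k + 1)
            * Real.sin ((2 * q + 1) * (θ + 2 * Real.pi * ℓ) / (2 * m + 1))
        = ((-1) ^ q / 2 ^ (2 * k + 1)) * (Nat.choose (2 * k + 1) (k - q) : ℝ)) ∧
    (k < q →
      (1 / (2 * m + 1 : ℝ)) * ∑ ℓ ∈ Finset.range (2 * m + 1),
          (Real.sin ((θ + 2 * Real.pi * ℓ) / (2 * m + 1))) ^ (2 * k + 1)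
            * Real.sin ((2 * q + 1) * (θ + 2 * Real.pi * ℓ) / (2 * m + 1)) = 0) := by
  constructor
  · intro h1 h2
    have h3 := keyC θ m q k hq h2
    rw [if_pos h1] at h3
    have h5 : (∑ ℓ ∈ Finset.range (2 * m + 1),
          (Real.sin ((θ + 2 * Real.pi * ℓ) / (2 * m + 1))) ^ (2 * k + 1)
            * Real.sin ((2 * q + 1) * (θ + 2 * Real.pi * ℓ) / (2 * m + 1)))
        = ((2*m+1:ℕ):ℝ) * ((-1)^q / 2^(2*k+1)) * ((2*k+1).choose (k-q) : ℝ) := by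
      exact_mod_cast h3
    rw [h5]
    have hne : (2*(m:ℝ)+1) ≠ 0 := by positivity
    push_cast
    field_simp
  · intro h1
    have h2 : k < 2*m - q := by omega
    have h3 := keyC θ m q k hq h2
    rw [if_neg (by omega)] at h3
    have h5 : (∑ ℓ ∈ Finset.range (2 * m + 1),
          (Real.sin ((θ + 2 * Real.pi * ℓ) / (2 * m + 1))) ^ (2 * k + 1)
            * Real.sin ((2 * q + 1) * (θ + 2 * Real.pi * ℓ) / (2 * m + 1))) = 0 := by
      exact_mod_cast h3
    rw [h5, mul_zero]
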